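/- For λ, λ', α, α' ∈ ℂ \ {0} and β, β', γ, γ' ∈ ℂ, the 𝔏-modules Ω(λ, α, β, γ) and Ω(λ', α', β', γ') are isomorphic if and only if (λ, α, γ) = (λ', α', γ') and (β = β' or β = −β' − 1). -/

import Mathlib

open MvPolynomial

abbrev R2 : Type := MvPolynomial (Fin 2) ℂ

/-- Substitution `g(s,t) ↦ g(s - u, t + v)`. -/
noncomputable def sh (u v : ℂ) : R2 →ₐ[ℂ] R2 := aeval ![X 0 - C u, X 1 + C v]

/-- Action of `e_i` in `Ω(λ,α,β,γ)`. -/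
noncomputable def omE (lam a : ℂ) (i : ℤ) (g : R2) : R2 :=
  C (lam ^ i * a) * sh (i : ℂ) (-2) g

/-- Action of `f_i` in `Ω(λ,α,β,γ)`. -/
noncomputable def omF (lam a b : ℂ) (i : ℤ) (g : R2) : R2 :=
  C (-(lam ^ i / a)) * (C 2⁻¹ * X 1 - C b) * (C 2⁻¹ * X 1 + C b + 1) * sh (i : ℂ) 2 g

/-- Action of `h_i`. -/
noncomputable def opH (lam : ℂ) (i : ℤ) (g : R2) : R2 :=
  C (lam ^ i) * X 1 * sh (i : ℂ) 0 g

/-- Action of `d_i`. -/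
noncomputable def opD (lam c : ℂ) (i : ℤ) (g : R2) : R2 :=
  C (lam ^ i) * (X 0 + C ((i : ℂ) * c)) * sh (i : ℂ) 0 g

lemma sh_zero (g : R2) : sh 0 0 g = g := by
  have h : (![X 0 - C 0, X 1 + C 0] : Fin 2 → R2) = X := by
    funext i; fin_cases i <;> simp
  show aeval ![X 0 - C 0, X 1 + C 0] g = g
  rw [h]; exact aeval_X_left_apply g

lemma sh_C (u v κ : ℂ) : sh u v (C κ) = C κ := by
  simp [sh, algebraMap_eq]

lemma sh_one (u v : ℂ) : sh u v (1 : R2) = 1 := map_one _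

lemma mv_unit_eq_C {p : R2} (hp : IsUnit p) : ∃ κ : ℂ, κ ≠ 0 ∧ p = C κ := by
  have h1 : IsUnit (finSuccEquiv ℂ 1 p) := hp.map _
  obtain ⟨r, hr, hrC⟩ := Polynomial.isUnit_iff.1 h1
  have h2 : IsUnit (finSuccEquiv ℂ 0 r) := hr.map _
  obtain ⟨r2, hr2, hr2C⟩ := Polynomial.isUnit_iff.1 h2
  obtain ⟨κ, rfl⟩ := C_surjective (Fin 0) r2
  refine ⟨κ, ?_, ?_⟩
  · intro h; subst h; simp at hr2
  · have hrκ : r = C κ := by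
      apply (finSuccEquiv ℂ 0).injective
      rw [← hr2C]; simp [finSuccEquiv_apply]
    apply (finSuccEquiv ℂ 1).injective
    rw [← hrC, hrκ]; simp [finSuccEquiv_apply]

lemma phi_mul (φ : R2 ≃ₗ[ℂ] R2)
    (h0 : ∀ g : R2, φ (X 0 * g) = X 0 * φ g)
    (h1 : ∀ g : R2, φ (X 1 * g) = X 1 * φ g)
    (p g : R2) : φ (p * g) = p * φ g := by
  induction p using MvPolynomial.induction_on generalizing g with
  | C r => rw [← smul_eq_C_mul, ← smul_eq_C_mul, map_smul]
  | add p q hp hq => rw [add_mul, map_add, hp, hq, add_mul]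
  | mul_X p i hp =>
    have hX : ∀ g : R2, φ (X i * g) = X i * φ g := by
      fin_cases i
      · exact h0
      · exact h1
    rw [mul_assoc, hp, hX, ← mul_assoc]

/-- Ω(λ,α,β,γ) ≅ Ω(λ',α',β',γ') iff (λ,α,γ) = (λ',α',γ') and β = β' or β = −β'−1. -/
theorem stmt12 (lam lam' a a' : ℂ) (hlam : lam ≠ 0) (hlam' : lam' ≠ 0)
    (ha : a ≠ 0) (ha' : a' ≠ 0) (b b' c c' : ℂ) :
    (∃ φ : R2 ≃ₗ[ℂ] R2,
      (∀ (i : ℤ) (g : R2), φ (omE lam a i g) = omE lam' a' i (φ g)) ∧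
      (∀ (i : ℤ) (g : R2), φ (omF lam a b i g) = omF lam' a' b' i (φ g)) ∧
      (∀ (i : ℤ) (g : R2), φ (opH lam i g) = opH lam' i (φ g)) ∧
      (∀ (i : ℤ) (g : R2), φ (opD lam c i g) = opD lam' c' i (φ g)))
    ↔ (lam = lam' ∧ a = a' ∧ c = c' ∧ (b = b' ∨ b = -b' - 1)) := by
  constructor
  · rintro ⟨φ, hE, hF, hH, hD⟩
    have h1 : ∀ g : R2, φ (X 1 * g) = X 1 * φ g := by
      intro g
      have := hH 0 g
      simpa [opH, sh_zero] using this
    have h0 : ∀ g : R2, φ (X 0 * g) = X 0 * φ g := by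
      intro g
      have := hD 0 g
      simpa [opD, sh_zero] using this
    have hmul := phi_mul φ h0 h1
    have hrep : ∀ p : R2, φ p = p * φ 1 := by
      intro p; have := hmul p 1; rwa [mul_one] at this
    have h1s : ∀ q : R2, φ.symm (X 1 * q) = X 1 * φ.symm q := by
      intro q
      apply φ.injective
      rw [LinearEquiv.apply_symm_apply, h1, LinearEquiv.apply_symm_apply]
    have h0s : ∀ q : R2, φ.symm (X 0 * q) = X 0 * φ.symm q := by
      intro q
      apply φ.injective
      rw [LinearEquiv.apply_symm_apply, h0, LinearEquiv.apply_symm_apply]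
    have hreps : ∀ p : R2, φ.symm p = p * φ.symm 1 := by
      intro p; have := phi_mul φ.symm h0s h1s p 1; rwa [mul_one] at this
    have huv : φ 1 * φ.symm 1 = 1 := by
      have h := hreps (φ 1)
      rw [φ.symm_apply_apply] at h
      exact h.symm
    obtain ⟨κ, hκ, hu⟩ := mv_unit_eq_C (IsUnit.of_mul_eq_one _ huv)
    -- lam = lam'
    have keyH := hH 1 1
    rw [hrep, hu] at keyH
    simp only [opH, zpow_one, Int.cast_one, sh_one, sh_C, mul_one] at keyH
    have hlameq : lam = lam' := by
      have h := congrArg (eval (fun _ => (1:ℂ))) keyH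
      simp only [eval_mul, eval_C, eval_X, mul_one] at h
      exact mul_right_cancel₀ hκ h
    -- a = a'
    have keyE := hE 0 1
    rw [hrep, hu] at keyE
    simp only [omE, zpow_zero, one_mul, Int.cast_zero, sh_one, sh_C, mul_one] at keyE
    have haeq : a = a' := by
      have h := congrArg (eval (fun _ => (0:ℂ))) keyE
      simp only [eval_mul, eval_C] at h
      exact mul_right_cancel₀ hκ h
    -- c = c'
    have keyD := hD 1 1
    rw [hrep, hu] at keyD
    simp only [opD, zpow_one, Int.cast_one, one_mul, sh_one, sh_C, mul_one] at keyD
    have hceq : c = c' := by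
      subst hlameq
      have h := congrArg (eval (fun _ => (0:ℂ))) keyD
      simp only [eval_mul, eval_add, eval_C, eval_X, zero_add] at h
      exact mul_left_cancel₀ hlam (mul_right_cancel₀ hκ h)
    -- b relation
    have keyF := hF 0 1
    rw [hrep, hu] at keyF
    simp only [omF, zpow_zero, Int.cast_zero, sh_one, sh_C, mul_one] at keyF
    have h := congrArg (eval (fun _ => (0:ℂ))) keyF
    rw [← haeq] at h
    simp only [eval_mul, eval_add, eval_sub, eval_C, eval_X, map_one, mul_zero, zero_sub,
      zero_add] at h
    have h2 := mul_right_cancel₀ hκ h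
    have hfact : (b - b') * (b + b' + 1) = 0 := by
      field_simp at h2
      linear_combination h2
    refine ⟨hlameq, haeq, hceq, ?_⟩
    rcases mul_eq_zero.1 hfact with h | h
    · exact Or.inl (sub_eq_zero.1 h)
    · exact Or.inr (by linear_combination h)
  · rintro ⟨rfl, rfl, rfl, hb⟩
    refine ⟨LinearEquiv.refl ℂ R2, fun i g => rfl, ?_, fun i g => rfl, fun i g => rfl⟩
    intro i g
    simp only [LinearEquiv.refl_apply]
    rcases hb with rfl | rfl
    · rfl
    · simp only [omF, map_sub, map_neg, map_one]
      ring
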